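/- arXiv:2101.04388 — 2 statements merged into one kernel-verified Lean document; each statement's English description precedes it below -/
import Mathlib

section
/- Let M, K, N be positive integers with K ≤ M·N, and let μ, μ̂ : Fin M → ℕ → ℝ. For k : Fin M → ℕ define the system reward V(k) = ∑_{m} k(m)·μ(m, k(m)) and the estimated system reward V̂(k) = ∑_{m} k(m)·μ̂(m, k(m)), and let S = { k : Fin M → ℕ : ∑_m k(m) = K } be the set of feasible configurations. Suppose J₁ is the maximum of V over S, J₂ is a real number with J₂ < J₁ such that every k ∈ S with V(k) ≠ J₁ satisfies V(k) ≤ J₂, and set Δ = (J₁ − J₂)/(2·M·N). If |μ̂(m, n) − μ(m, n)| < Δ for every m ∈ Fin M and every natural number n ≤ K, then every k̂ ∈ S that maximizes V̂ over S satisfies V(k̂) = J₁. -/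
open Finset

/-- Correctness of the allocation phase: if every estimate `μ̂(m,n)` is within
`Δ = (J₁ - J₂)/(2MN)` of the true mean `μ(m,n)`, then any feasible configuration
maximizing the estimated system reward achieves the optimal true system reward `J₁`. -/
theorem optimal_config_from_estimates
    (M K N : ℕ) (hM : 0 < M) (hK : 0 < K) (hN : 0 < N) (hKMN : K ≤ M * N)
    (μ μhat : Fin M → ℕ → ℝ) (J₁ J₂ : ℝ)
    (hJ₁_ub : ∀ k : Fin M → ℕ, (∑ m, k m = K) →
      (∑ m, (k m : ℝ) * μ m (k m)) ≤ J₁)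
    (hJ₁_mem : ∃ k : Fin M → ℕ, (∑ m, k m = K) ∧
      (∑ m, (k m : ℝ) * μ m (k m)) = J₁)
    (hJ₂_lt : J₂ < J₁)
    (hJ₂ : ∀ k : Fin M → ℕ, (∑ m, k m = K) →
      (∑ m, (k m : ℝ) * μ m (k m)) ≠ J₁ →
      (∑ m, (k m : ℝ) * μ m (k m)) ≤ J₂)
    (hest : ∀ m : Fin M, ∀ n : ℕ, n ≤ K →
      |μhat m n - μ m n| < (J₁ - J₂) / (2 * M * N))
    (khat : Fin M → ℕ) (hkhat : ∑ m, khat m = K)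
    (hkhat_max : ∀ k : Fin M → ℕ, (∑ m, k m = K) →
      (∑ m, (k m : ℝ) * μhat m (k m)) ≤ ∑ m, (khat m : ℝ) * μhat m (khat m)) :
    (∑ m, (khat m : ℝ) * μ m (khat m)) = J₁ := by
  set Δ : ℝ := (J₁ - J₂) / (2 * M * N) with hΔdef
  have hΔpos : 0 < Δ := by
    apply div_pos (by linarith)
    positivity
  -- error bound for any feasible configuration
  have key : ∀ k : Fin M → ℕ, (∑ m, k m = K) →
      |(∑ m, (k m : ℝ) * μhat m (k m)) - (∑ m, (k m : ℝ) * μ m (k m))| < (J₁ - J₂) / 2 := by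
    intro k hk
    have hle : ∀ m : Fin M, k m ≤ K := by
      intro m
      rw [← hk]
      exact Finset.single_le_sum (fun i _ => Nat.zero_le _) (mem_univ m)
    have hex : ∃ m : Fin M, 0 < k m := by
      by_contra h
      push_neg at h
      simp only [Nat.le_zero] at h
      have : (∑ m, k m) = 0 := Finset.sum_eq_zero (fun m _ => h m)
      omega
    obtain ⟨m₀, hm₀⟩ := hex
    have hsumlt : (∑ m, (k m : ℝ) * |μhat m (k m) - μ m (k m)|) < ∑ m : Fin M, (k m : ℝ) * Δ := by
      apply Finset.sum_lt_sum
      · intro i _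
        exact mul_le_mul_of_nonneg_left (le_of_lt (hest i (k i) (hle i))) (Nat.cast_nonneg _)
      · exact ⟨m₀, mem_univ m₀, by
          have := hest m₀ (k m₀) (hle m₀)
          have hpos : (0:ℝ) < k m₀ := by exact_mod_cast hm₀
          exact mul_lt_mul_of_pos_left this hpos⟩
    have hKΔ : (∑ m : Fin M, (k m : ℝ) * Δ) ≤ (J₁ - J₂) / 2 := by
      rw [← Finset.sum_mul]
      have hsum : (∑ m, (k m : ℝ)) = (K : ℝ) := by exact_mod_cast hk
      rw [hsum]
      have hKle : (K : ℝ) ≤ (M : ℝ) * N := by exact_mod_cast hKMN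
      have : (K : ℝ) * Δ ≤ ((M : ℝ) * N) * Δ := by
        apply mul_le_mul_of_nonneg_right hKle (le_of_lt hΔpos)
      have heq : ((M : ℝ) * N) * Δ = (J₁ - J₂) / 2 := by
        rw [hΔdef]
        field_simp
      linarith
    calc |(∑ m, (k m : ℝ) * μhat m (k m)) - (∑ m, (k m : ℝ) * μ m (k m))|
        = |∑ m, ((k m : ℝ) * μhat m (k m) - (k m : ℝ) * μ m (k m))| := by
          rw [Finset.sum_sub_distrib]
      _ ≤ ∑ m, |(k m : ℝ) * μhat m (k m) - (k m : ℝ) * μ m (k m)| :=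
          Finset.abs_sum_le_sum_abs _ _
      _ = ∑ m, (k m : ℝ) * |μhat m (k m) - μ m (k m)| := by
          apply Finset.sum_congr rfl
          intro i _
          rw [← mul_sub, abs_mul, abs_of_nonneg (Nat.cast_nonneg _)]
      _ < ∑ m : Fin M, (k m : ℝ) * Δ := hsumlt
      _ ≤ (J₁ - J₂) / 2 := hKΔ
  obtain ⟨kstar, hkstar, hkstarJ⟩ := hJ₁_mem
  by_contra hne
  have hlow := hJ₂ khat hkhat hne
  have h1 := key khat hkhat
  have h2 := key kstar hkstar
  have h3 := hkhat_max kstar hkstar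
  rw [abs_lt] at h1 h2
  linarith
end

section
/- Let τ ≥ 1 and Δ > 0 be real numbers, r ≥ 1 a natural number, and T a real number with (r : ℝ) ≤ √(2T) and 2T ≥ 1. Then ∑_{ℓ=1}^{r} ( log(ℓ·τ)/(2Δ²) + 1/(e − 2) ) ≤ √(2T)·( log τ/(2Δ²) + 1.4 ) + (√(2T) + 1)·log(2T)/(4Δ²), where log is the natural logarithm and e is Euler's number. -/
open Finset

/-- Main chain of inequalities in the proof of Theorem 2: bounding the regret summed over
the `r ≤ √(2T)` complete super-epochs with no user change, with `C = log τ/(2Δ²) + 1.4`. -/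
theorem superepoch_regret_chain (τ Δ : ℝ) (hτ : 1 ≤ τ) (hΔ : 0 < Δ)
    (r : ℕ) (hr : 1 ≤ r) (T : ℝ)
    (h1 : (r : ℝ) ≤ Real.sqrt (2 * T)) (h2 : 1 ≤ 2 * T) :
    ∑ ℓ ∈ Finset.Icc 1 r,
        (Real.log ((ℓ : ℝ) * τ) / (2 * Δ ^ 2) + 1 / (Real.exp 1 - 2))
      ≤ Real.sqrt (2 * T) * (Real.log τ / (2 * Δ ^ 2) + 1.4)
        + (Real.sqrt (2 * T) + 1) * Real.log (2 * T) / (4 * Δ ^ 2) := by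
  have hΔ2 : (0:ℝ) < 2 * Δ ^ 2 := by positivity
  have hlogT : 0 ≤ Real.log (2 * T) := Real.log_nonneg h2
  have hlogτ : 0 ≤ Real.log τ := Real.log_nonneg hτ
  have hsqrt : (1:ℝ) ≤ Real.sqrt (2 * T) :=
    le_trans (by exact_mod_cast hr) h1
  -- e - 2 bound
  have he : (1:ℝ)/(Real.exp 1 - 2) ≤ 1.4 := by
    have h := Real.add_one_le_exp (1:ℝ)
    have h2e : Real.exp 1 - 2 ≥ 1/1.4 := by
      nlinarith [Real.exp_one_gt_d9]
    rw [div_le_iff₀ (by nlinarith [Real.exp_one_gt_d9])]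
    nlinarith
  set B : ℝ := Real.log τ / (2 * Δ ^ 2) + 1.4 + Real.log (2 * T) / 2 / (2 * Δ ^ 2) with hB
  have hterm : ∀ ℓ ∈ Finset.Icc 1 r,
      Real.log ((ℓ : ℝ) * τ) / (2 * Δ ^ 2) + 1 / (Real.exp 1 - 2) ≤ B := by
    intro ℓ hℓ
    simp only [Finset.mem_Icc] at hℓ
    have hℓ1 : (1:ℝ) ≤ (ℓ:ℝ) := Nat.one_le_cast.mpr hℓ.1
    have hlr : (ℓ:ℝ) ≤ Real.sqrt (2 * T) := le_trans (Nat.cast_le.mpr hℓ.2) h1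
    have hlogl : Real.log (ℓ:ℝ) ≤ Real.log (2 * T) / 2 := by
      calc Real.log (ℓ:ℝ) ≤ Real.log (Real.sqrt (2 * T)) :=
            Real.log_le_log (by linarith) hlr
        _ = Real.log (2 * T) / 2 := by
            rw [Real.log_sqrt (by linarith)]
    have hsplit : Real.log ((ℓ : ℝ) * τ) = Real.log (ℓ:ℝ) + Real.log τ :=
      Real.log_mul (by linarith) (by linarith)
    rw [hsplit, hB, add_div]
    have hd : Real.log (ℓ:ℝ) / (2 * Δ ^ 2) ≤ Real.log (2 * T) / 2 / (2 * Δ ^ 2) := by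
      gcongr
    linarith
  have hsum : ∑ ℓ ∈ Finset.Icc 1 r,
      (Real.log ((ℓ : ℝ) * τ) / (2 * Δ ^ 2) + 1 / (Real.exp 1 - 2))
      ≤ (r:ℝ) * B := by
    calc ∑ ℓ ∈ Finset.Icc 1 r, (Real.log ((ℓ : ℝ) * τ) / (2 * Δ ^ 2) + 1 / (Real.exp 1 - 2))
        ≤ ∑ ℓ ∈ Finset.Icc 1 r, B := Finset.sum_le_sum hterm
      _ = (r:ℝ) * B := by
          rw [Finset.sum_const, Nat.card_Icc]
          simp [nsmul_eq_mul]
  have hB0 : 0 ≤ B := by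
    rw [hB]; positivity
  have : (r:ℝ) * B ≤ Real.sqrt (2 * T) * B :=
    mul_le_mul_of_nonneg_right h1 hB0
  have hfinal : Real.sqrt (2 * T) * B
      ≤ Real.sqrt (2 * T) * (Real.log τ / (2 * Δ ^ 2) + 1.4)
        + (Real.sqrt (2 * T) + 1) * Real.log (2 * T) / (4 * Δ ^ 2) := by
    rw [hB]
    have h4 : (0:ℝ) < 4 * Δ ^ 2 := by positivity
    have heq : Real.log (2 * T) / 2 / (2 * Δ ^ 2) = Real.log (2 * T) / (4 * Δ ^ 2) := by
      rw [div_div]; congr 1; ring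
    rw [heq, mul_add, mul_div_assoc]
    have key : Real.sqrt (2 * T) * (Real.log (2 * T) / (4 * Δ ^ 2))
        ≤ (Real.sqrt (2 * T) + 1) * (Real.log (2 * T) / (4 * Δ ^ 2)) :=
      mul_le_mul_of_nonneg_right (by linarith) (div_nonneg hlogT h4.le)
    linarith
  exact le_trans hsum (le_trans this hfinal)
end
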